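/- Let (X_1, X_2) be a bivariate centered Gaussian vector with unit variances and correlation ρ ∈ (−1,1). Then E[(X_1² − 1) · 1_{X_1 ≥ 0, X_2 ≥ 0}] = φ(0)² ρ √(1−ρ²) and E[(X_1 X_2 − ρ) · 1_{X_1 ≥ 0, X_2 ≥ 0}] = φ(0)² √(1−ρ²). -/

import Mathlib

open MeasureTheory ProbabilityTheory

open Real Set Filter
open scoped ENNReal NNReal

noncomputable def gpdf (x : ℝ) : ℝ := (Real.sqrt (2 * Real.pi))⁻¹ * Real.exp (-x ^ 2 / 2)

lemma gpdf_eq : gaussianPDFReal 0 1 = gpdf := by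
  ext x
  simp [gaussianPDFReal, gpdf]

lemma gpdf_nonneg (x : ℝ) : 0 ≤ gpdf x := by
  rw [← gpdf_eq]; exact gaussianPDFReal_nonneg 0 1 x

lemma continuous_gpdf : Continuous gpdf := by
  unfold gpdf
  fun_prop

lemma integrable_gpdf : Integrable gpdf := by
  rw [← gpdf_eq]; exact integrable_gaussianPDFReal 0 1

lemma integral_gpdf : ∫ x, gpdf x = 1 := by
  rw [← gpdf_eq]; exact integral_gaussianPDFReal_eq_one 0 one_ne_zero

lemma gpdf_even (x : ℝ) : gpdf (-x) = gpdf x := by simp [gpdf]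

lemma hasDerivAt_gpdf (x : ℝ) : HasDerivAt gpdf (-x * gpdf x) x := by
  have h1 : HasDerivAt (fun y : ℝ => -y ^ 2 / 2) (-x) x := by
    have := ((hasDerivAt_pow 2 x).neg).div_const 2
    exact this.congr_deriv (by ring)
  have h2 := (h1.exp).const_mul (Real.sqrt (2 * Real.pi))⁻¹
  exact h2.congr_deriv (by unfold gpdf; ring)

lemma integrable_mul_gpdf : Integrable (fun x : ℝ => x * gpdf x) := by
  have h : Integrable (fun x : ℝ => x * Real.exp (-x ^ 2 / 2)) := by
    have := integrable_mul_exp_neg_mul_sq (b := (1:ℝ)/2) (by norm_num)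
    convert this using 2 with x
    ring_nf
  have := h.const_mul (Real.sqrt (2 * Real.pi))⁻¹
  convert this using 2 with x
  unfold gpdf; ring

lemma integrable_sq_mul_gpdf : Integrable (fun x : ℝ => x ^ 2 * gpdf x) := by
  have h : Integrable (fun x : ℝ => x ^ 2 * Real.exp (-x ^ 2 / 2)) := by
    have := integrable_rpow_mul_exp_neg_mul_sq (b := (1:ℝ)/2) (by norm_num) (s := 2) (by norm_num)
    convert this using 2 with x
    rw [show ((2:ℝ)) = ((2:ℕ):ℝ) by norm_num, Real.rpow_natCast]
    ring_nf
  have := h.const_mul (Real.sqrt (2 * Real.pi))⁻¹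
  convert this using 2 with x
  unfold gpdf; ring

lemma tendsto_gpdf : Tendsto gpdf atTop (nhds 0) := by
  rw [show (0:ℝ) = (Real.sqrt (2 * Real.pi))⁻¹ * 0 by ring]
  apply Tendsto.const_mul
  apply Real.tendsto_exp_atBot.comp
  apply Filter.Tendsto.atBot_div_const (by norm_num)
  exact tendsto_neg_atBot_iff.mpr (tendsto_pow_atTop (by norm_num))

lemma tendsto_mul_gpdf : Tendsto (fun x : ℝ => x * gpdf x) atTop (nhds 0) := by
  have hb : Tendsto (fun x : ℝ => (Real.sqrt (2 * Real.pi))⁻¹ * (x * Real.exp (-x))) atTop (nhds 0) := by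
    rw [show (0:ℝ) = (Real.sqrt (2 * Real.pi))⁻¹ * 0 by ring]
    apply Tendsto.const_mul
    simpa using Real.tendsto_pow_mul_exp_neg_atTop_nhds_zero 1
  apply squeeze_zero_norm' _ hb
  · filter_upwards [Filter.eventually_ge_atTop (2:ℝ)] with x hx
    have hx0 : (0:ℝ) ≤ x := by linarith
    have h1 : Real.exp (-x ^ 2 / 2) ≤ Real.exp (-x) := by
      apply Real.exp_le_exp.2
      nlinarith
    have : ‖x * gpdf x‖ = x * ((Real.sqrt (2 * Real.pi))⁻¹ * Real.exp (-x ^ 2 / 2)) := by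
      rw [Real.norm_eq_abs, abs_of_nonneg]
      · rfl
      · exact mul_nonneg hx0 (gpdf_nonneg x)
    rw [this]
    have hs : (0:ℝ) ≤ (Real.sqrt (2 * Real.pi))⁻¹ := by positivity
    calc x * ((Real.sqrt (2 * Real.pi))⁻¹ * Real.exp (-x ^ 2 / 2))
        ≤ x * ((Real.sqrt (2 * Real.pi))⁻¹ * Real.exp (-x)) := by
          apply mul_le_mul_of_nonneg_left _ hx0
          exact mul_le_mul_of_nonneg_left h1 hs
      _ = (Real.sqrt (2 * Real.pi))⁻¹ * (x * Real.exp (-x)) := by ring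

noncomputable def gcdf (a : ℝ) : ℝ := ∫ y in Iic a, gpdf y

noncomputable def gsf (c : ℝ) : ℝ := ∫ y in Ici c, gpdf y

lemma gsf_eq (c : ℝ) : gsf c = 1 - gcdf c := by
  have h := integral_add_compl (measurableSet_Iic (a := c)) integrable_gpdf
  rw [compl_Iic] at h
  have h2 : gsf c = ∫ y in Ioi c, gpdf y := integral_Ici_eq_integral_Ioi
  unfold gcdf
  rw [h2]
  have h3 : (∫ (x : ℝ), gpdf x) = 1 := integral_gpdf
  linarith [h, h3]

lemma hasDerivAt_gcdf (a : ℝ) : HasDerivAt gcdf (gpdf a) a := by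
  have key : ∀ u : ℝ, gcdf u = gcdf 0 + ∫ t in (0:ℝ)..u, gpdf t := by
    intro u
    have := intervalIntegral.integral_Iic_sub_Iic
      (integrable_gpdf.integrableOn (s := Iic (0:ℝ)))
      (integrable_gpdf.integrableOn (s := Iic u))
    unfold gcdf
    linarith [this]
  have hftc : HasDerivAt (fun u => gcdf 0 + ∫ t in (0:ℝ)..u, gpdf t) (gpdf a) a := by
    apply HasDerivAt.const_add
    apply intervalIntegral.integral_hasDerivAt_right
      integrable_gpdf.intervalIntegrable
      (continuous_gpdf.stronglyMeasurableAtFilter _ _)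
      continuous_gpdf.continuousAt
  exact hftc.congr_of_eventuallyEq (Filter.Eventually.of_forall fun x => (key x))

lemma hasDerivAt_gsf (c : ℝ) : HasDerivAt gsf (-gpdf c) c := by
  have : HasDerivAt (fun u => 1 - gcdf u) (-gpdf c) c := (hasDerivAt_gcdf c).const_sub 1
  exact this.congr_of_eventuallyEq (Filter.Eventually.of_forall fun x => (gsf_eq x))

lemma continuous_gsf : Continuous gsf :=
  continuous_iff_continuousAt.2 fun c => (hasDerivAt_gsf c).continuousAt

lemma gsf_nonneg (c : ℝ) : 0 ≤ gsf c :=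
  setIntegral_nonneg measurableSet_Ici fun x _ => gpdf_nonneg x

lemma gsf_le_one (c : ℝ) : gsf c ≤ 1 := by
  rw [← integral_gpdf]
  exact setIntegral_le_integral integrable_gpdf (Filter.Eventually.of_forall fun x => gpdf_nonneg x)

lemma nu_Ici (c : ℝ) : ((gaussianReal 0 1) (Ici c)).toReal = gsf c := by
  rw [gaussianReal_apply_eq_integral 0 one_ne_zero, gpdf_eq,
    ENNReal.toReal_ofReal (setIntegral_nonneg measurableSet_Ici fun x _ => gpdf_nonneg x)]
  rfl

lemma nu_eq : gaussianReal 0 1 =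
    volume.withDensity (fun x => ENNReal.ofReal (gpdf x)) := by
  rw [gaussianReal_of_var_ne_zero 0 one_ne_zero]
  congr 1
  ext x
  rw [gaussianPDF, gpdf_eq]

lemma setIntegral_nu (G : ℝ → ℝ) {s : Set ℝ} (hs : MeasurableSet s) :
    ∫ x in s, G x ∂(gaussianReal 0 1) = ∫ x in s, gpdf x * G x := by
  rw [nu_eq, restrict_withDensity hs]
  have hmeas : Measurable fun x => (gpdf x).toNNReal :=
    continuous_gpdf.measurable.real_toNNReal
  have : (fun x => ENNReal.ofReal (gpdf x)) = (fun x => ((gpdf x).toNNReal : ℝ≥0∞)) := rfl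
  rw [this, integral_withDensity_eq_integral_smul hmeas]
  congr 1
  ext x
  rw [NNReal.smul_def, Real.coe_toNNReal _ (gpdf_nonneg x), smul_eq_mul]

lemma integrable_nu_iff (G : ℝ → ℝ) (hG : Measurable G) :
    Integrable G (gaussianReal 0 1) ↔ Integrable (fun x => gpdf x * G x) := by
  rw [nu_eq]
  have hmeas : Measurable fun x => (gpdf x).toNNReal :=
    continuous_gpdf.measurable.real_toNNReal
  have : (fun x => ENNReal.ofReal (gpdf x)) = (fun x => ((gpdf x).toNNReal : ℝ≥0∞)) := rfl
  rw [this, integrable_withDensity_iff_integrable_smul hmeas]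
  constructor <;> intro h <;> [skip; skip] <;>
  · apply h.congr
    filter_upwards with x
    rw [NNReal.smul_def, Real.coe_toNNReal _ (gpdf_nonneg x), smul_eq_mul]

lemma integrable_id_nu : Integrable (fun y : ℝ => y) (gaussianReal 0 1) := by
  exact (integrable_nu_iff (fun y => y) measurable_id).mpr
    (integrable_mul_gpdf.congr (Filter.Eventually.of_forall fun x => by ring_nf))

lemma integrable_sq_nu : Integrable (fun y : ℝ => y ^ 2) (gaussianReal 0 1) := by
  exact (integrable_nu_iff (fun y => y ^ 2) (measurable_id.pow_const 2)).mpr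
    (integrable_sq_mul_gpdf.congr (Filter.Eventually.of_forall fun x => by ring_nf))

lemma nu_inner_id (c : ℝ) : ∫ y in Ici c, y ∂(gaussianReal 0 1) = gpdf c := by
  rw [setIntegral_nu _ measurableSet_Ici, integral_Ici_eq_integral_Ioi]
  have hderiv : ∀ y ∈ Ici c, HasDerivAt (fun y => -gpdf y) (gpdf y * y) y := by
    intro y _
    have := (hasDerivAt_gpdf y).neg
    exact this.congr_deriv (by ring)
  have f'int : IntegrableOn (fun y => gpdf y * y) (Ioi c) := by
    apply Integrable.integrableOn
    exact integrable_mul_gpdf.congr (Filter.Eventually.of_forall fun x => by ring)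
  have hf : Tendsto (fun y => -gpdf y) atTop (nhds 0) := by
    simpa using tendsto_gpdf.neg
  have := MeasureTheory.integral_Ioi_of_hasDerivAt_of_tendsto' hderiv f'int hf
  rw [this]
  ring

lemma gpdf_le (x : ℝ) : gpdf x ≤ (Real.sqrt (2 * Real.pi))⁻¹ := by
  unfold gpdf
  have h1 : Real.exp (-x ^ 2 / 2) ≤ 1 := Real.exp_le_one_iff.mpr (by nlinarith [sq_nonneg x])
  have h2 : (0:ℝ) ≤ (Real.sqrt (2 * Real.pi))⁻¹ := by positivity
  nlinarith

lemma K1 (s : ℝ) :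
    ∫ x in Ioi (0:ℝ), x * gpdf x * gpdf (s * x) = (2 * Real.pi)⁻¹ * (1 + s ^ 2)⁻¹ := by
  set c : ℝ := 1 + s ^ 2 with hc_def
  have hc : 0 < c := by positivity
  have hpt : ∀ x : ℝ, x * gpdf x * gpdf (s * x)
      = (2 * Real.pi)⁻¹ * (x * Real.exp (-(c * x ^ 2) / 2)) := by
    intro x
    unfold gpdf
    have he : Real.exp (-x ^ 2 / 2) * Real.exp (-(s * x) ^ 2 / 2)
        = Real.exp (-(c * x ^ 2) / 2) := by
      rw [← Real.exp_add]
      congr 1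
      rw [hc_def]; ring
    have hs2 : (Real.sqrt (2 * Real.pi))⁻¹ * (Real.sqrt (2 * Real.pi))⁻¹ = (2 * Real.pi)⁻¹ := by
      rw [← mul_inv, Real.mul_self_sqrt (by positivity)]
    rw [← hs2, ← he]
    ring
  have hderiv : ∀ x ∈ Ici (0:ℝ), HasDerivAt
      (fun x => -((2 * Real.pi)⁻¹ * c⁻¹ * Real.exp (-(c * x ^ 2) / 2)))
      ((2 * Real.pi)⁻¹ * (x * Real.exp (-(c * x ^ 2) / 2))) x := by
    intro x _
    have h1 : HasDerivAt (fun x : ℝ => -(c * x ^ 2) / 2) (-(c * x)) x := by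
      have := (((hasDerivAt_pow 2 x).const_mul c).neg).div_const 2
      exact this.congr_deriv (by ring)
    have h2 := ((h1.exp.const_mul ((2 * Real.pi)⁻¹ * c⁻¹)).neg)
    exact h2.congr_deriv (by
      rw [show -((2 * Real.pi)⁻¹ * c⁻¹ * (Real.exp (-(c * x ^ 2) / 2) * -(c * x)))
          = (2 * Real.pi)⁻¹ * (c⁻¹ * c) * (x * Real.exp (-(c * x ^ 2) / 2)) by ring,
        inv_mul_cancel₀ hc.ne', mul_one])
  have f'int : IntegrableOn (fun x => (2 * Real.pi)⁻¹ * (x * Real.exp (-(c * x ^ 2) / 2)))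
      (Ioi (0:ℝ)) := by
    apply Integrable.integrableOn
    apply Integrable.const_mul
    have := integrable_mul_exp_neg_mul_sq (b := c / 2) (half_pos hc)
    exact this.congr (Filter.Eventually.of_forall fun x => by ring_nf)
  have hT : Tendsto (fun x : ℝ => -((2 * Real.pi)⁻¹ * c⁻¹ * Real.exp (-(c * x ^ 2) / 2)))
      atTop (nhds 0) := by
    have h1 : Tendsto (fun x : ℝ => c * x ^ 2) atTop atTop :=
      (tendsto_pow_atTop (by norm_num)).const_mul_atTop hc
    have h2 : Tendsto (fun x : ℝ => -(c * x ^ 2) / 2) atTop atBot := by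
      apply Filter.Tendsto.atBot_div_const (by norm_num)
      exact tendsto_neg_atBot_iff.mpr h1
    have h3 := (Real.tendsto_exp_atBot.comp h2).const_mul ((2 * Real.pi)⁻¹ * c⁻¹)
    simpa using h3.neg
  have key := MeasureTheory.integral_Ioi_of_hasDerivAt_of_tendsto'
    (fun x hx => hderiv x hx) f'int hT
  calc ∫ x in Ioi (0:ℝ), x * gpdf x * gpdf (s * x)
      = ∫ x in Ioi (0:ℝ), (2 * Real.pi)⁻¹ * (x * Real.exp (-(c * x ^ 2) / 2)) :=
        setIntegral_congr_fun measurableSet_Ioi fun x _ => hpt x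
    _ = (2 * Real.pi)⁻¹ * (1 + s ^ 2)⁻¹ := by
        rw [key]
        simp [hc_def]

lemma intA (s : ℝ) : Integrable (fun x : ℝ => (x ^ 2 - 1) * gpdf x * gsf (-(s * x))) := by
  apply Integrable.mono' (g := fun x => x ^ 2 * gpdf x + gpdf x)
    (integrable_sq_mul_gpdf.add integrable_gpdf)
  · apply Continuous.aestronglyMeasurable
    exact (((continuous_pow 2).sub continuous_const).mul continuous_gpdf).mul
      (continuous_gsf.comp ((continuous_const.mul continuous_id).neg))
  · filter_upwards with x
    have h1 : |x ^ 2 - 1| ≤ x ^ 2 + 1 := by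
      rw [abs_le]; constructor <;> nlinarith [sq_nonneg x]
    have h2 := gsf_nonneg (-(s * x))
    have h3 := gsf_le_one (-(s * x))
    have h4 := gpdf_nonneg x
    rw [Real.norm_eq_abs, abs_mul, abs_mul, abs_of_nonneg h4, abs_of_nonneg h2]
    have e1 : |x ^ 2 - 1| * gpdf x * gsf (-(s * x)) ≤ |x ^ 2 - 1| * gpdf x := by
      nlinarith [mul_nonneg (abs_nonneg (x ^ 2 - 1)) h4]
    have e2 : |x ^ 2 - 1| * gpdf x ≤ (x ^ 2 + 1) * gpdf x := mul_le_mul_of_nonneg_right h1 h4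
    nlinarith [e1, e2]

lemma intB (s : ℝ) : Integrable (fun x : ℝ => x * gpdf x * gpdf (s * x)) := by
  apply Integrable.mono' (g := fun x => (Real.sqrt (2 * Real.pi))⁻¹ * |x * gpdf x|)
    (integrable_mul_gpdf.abs.const_mul _)
  · apply Continuous.aestronglyMeasurable
    exact (continuous_id.mul continuous_gpdf).mul
      (continuous_gpdf.comp (continuous_const.mul continuous_id))
  · filter_upwards with x
    have h1 := gpdf_nonneg (s * x)
    have h2 := gpdf_le (s * x)
    have h3 : (0:ℝ) ≤ |x * gpdf x| := abs_nonneg _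
    rw [Real.norm_eq_abs, abs_mul]
    rw [abs_of_nonneg h1]
    nlinarith

lemma IBP (s : ℝ) :
    ∫ x in Ioi (0:ℝ), (x ^ 2 - 1) * gpdf x * gsf (-(s * x))
      = s * ((2 * Real.pi)⁻¹ * (1 + s ^ 2)⁻¹) := by
  have hΨ : ∀ x : ℝ, HasDerivAt (fun x => gsf (-(s * x))) (s * gpdf (s * x)) x := by
    intro x
    have hin : HasDerivAt (fun x : ℝ => -(s * x)) (-s) x := by
      have := ((hasDerivAt_id x).const_mul s).neg
      exact this.congr_deriv (by simp)
    have := (hasDerivAt_gsf (-(s * x))).comp x hin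
    exact this.congr_deriv (by rw [gpdf_even]; ring)
  have hxg : ∀ x : ℝ, HasDerivAt (fun x : ℝ => x * gpdf x) ((1 - x ^ 2) * gpdf x) x := by
    intro x
    have := (hasDerivAt_id x).mul (hasDerivAt_gpdf x)
    exact this.congr_deriv (by simp only [id_eq, one_mul]; ring)
  have hF : ∀ x : ℝ, HasDerivAt (fun x : ℝ => -(x * gpdf x * gsf (-(s * x))))
      ((x ^ 2 - 1) * gpdf x * gsf (-(s * x)) - s * (x * gpdf x * gpdf (s * x))) x := by
    intro x
    have := ((hxg x).mul (hΨ x)).neg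
    exact this.congr_deriv (by ring)
  have f'int : IntegrableOn (fun x : ℝ =>
      (x ^ 2 - 1) * gpdf x * gsf (-(s * x)) - s * (x * gpdf x * gpdf (s * x)))
      (Ioi (0:ℝ)) :=
    ((intA s).sub ((intB s).const_mul s)).integrableOn
  have hT : Tendsto (fun x : ℝ => -(x * gpdf x * gsf (-(s * x)))) atTop (nhds 0) := by
    apply squeeze_zero_norm' _ tendsto_mul_gpdf
    filter_upwards [Filter.eventually_ge_atTop (0:ℝ)] with x hx
    have h2 := gsf_nonneg (-(s * x))
    have h3 := gsf_le_one (-(s * x))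
    have h4 := gpdf_nonneg x
    rw [norm_neg, Real.norm_eq_abs, abs_mul, abs_of_nonneg h2,
      abs_of_nonneg (mul_nonneg hx h4)]
    nlinarith [mul_le_mul_of_nonneg_left h3 (mul_nonneg hx h4)]
  have key := MeasureTheory.integral_Ioi_of_hasDerivAt_of_tendsto'
    (fun x _ => hF x) f'int hT
  simp only [zero_mul, neg_zero, sub_zero, mul_zero, zero_sub, neg_neg] at key
  rw [MeasureTheory.integral_sub (intA s).integrableOn
    (((intB s).const_mul s)).integrableOn] at key
  have hB : ∫ x in Ioi (0:ℝ), s * (x * gpdf x * gpdf (s * x))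
      = s * ((2 * Real.pi)⁻¹ * (1 + s ^ 2)⁻¹) := by
    rw [MeasureTheory.integral_const_mul, K1 s]
  have : (0:ℝ) = -(0 * gpdf 0 * gsf (-(s * 0))) := by ring
  linarith [key, hB]

lemma reduce (ρ t : ℝ) (ht : 0 < t) (f : ℝ × ℝ → ℝ)
    (hf : Integrable f ((gaussianReal 0 1).prod (gaussianReal 0 1))) :
    ∫ p in {p : ℝ × ℝ | 0 ≤ p.1 ∧ 0 ≤ ρ * p.1 + t * p.2}, f p
        ∂((gaussianReal 0 1).prod (gaussianReal 0 1))
      = ∫ x in Ioi (0:ℝ),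
          gpdf x * (∫ y in Ici (-(ρ * x) / t), f (x, y) ∂(gaussianReal 0 1)) := by
  set S : Set (ℝ × ℝ) := {p : ℝ × ℝ | 0 ≤ p.1 ∧ 0 ≤ ρ * p.1 + t * p.2} with hS_def
  have hS : MeasurableSet S := by
    have : S = {p : ℝ × ℝ | 0 ≤ p.1} ∩ {p : ℝ × ℝ | 0 ≤ ρ * p.1 + t * p.2} := rfl
    rw [this]
    exact ((isClosed_le continuous_const continuous_fst).measurableSet).inter
      ((isClosed_le continuous_const
        ((continuous_const.mul continuous_fst).add (continuous_const.mul continuous_snd))).measurableSet)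
  set G : ℝ → ℝ := fun x => ∫ y in Ici (-(ρ * x) / t), f (x, y) ∂(gaussianReal 0 1) with hG_def
  rw [← MeasureTheory.integral_indicator hS,
    MeasureTheory.integral_prod _ (hf.indicator hS)]
  have hinner : ∀ x : ℝ, (∫ y, S.indicator f (x, y) ∂(gaussianReal 0 1))
      = (Ici (0:ℝ)).indicator G x := by
    intro x
    by_cases hx : (0:ℝ) ≤ x
    · have hset : ∀ y : ℝ, ((x, y) ∈ S) ↔ (y ∈ Ici (-(ρ * x) / t)) := by
        intro y
        simp only [hS_def, Set.mem_setOf_eq, Set.mem_Ici]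
        constructor
        · rintro ⟨-, h2⟩
          rw [div_le_iff₀ ht] at *
          nlinarith
        · intro h
          refine ⟨hx, ?_⟩
          rw [div_le_iff₀ ht] at h
          nlinarith
      have heq : (fun y => S.indicator f (x, y))
          = fun y => (Ici (-(ρ * x) / t)).indicator (fun y => f (x, y)) y := by
        funext y
        simp only [Set.indicator_apply]
        exact if_congr (hset y) rfl rfl
      rw [heq, MeasureTheory.integral_indicator measurableSet_Ici,
        Set.indicator_of_mem (Set.mem_Ici.mpr hx) G]
    · have heq : (fun y => S.indicator f (x, y)) = fun _ => (0:ℝ) := by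
        funext y
        apply Set.indicator_of_notMem
        simp only [hS_def, Set.mem_setOf_eq]
        tauto
      rw [heq, integral_zero, Set.indicator_of_notMem (by simpa using hx) G]
  rw [integral_congr_ae (Filter.Eventually.of_forall hinner),
    MeasureTheory.integral_indicator measurableSet_Ici,
    setIntegral_nu G measurableSet_Ici, integral_Ici_eq_integral_Ioi]

/-- For a bivariate centered Gaussian `(X₁,X₂)` with unit variances and correlation
`ρ ∈ (−1,1)` — realized as `X₁ = Y₁`, `X₂ = ρY₁ + √(1−ρ²)Y₂` with `Y₁, Y₂` i.i.d.
standard normal — one has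
`E[(X₁² − 1) · 1_{X₁ ≥ 0, X₂ ≥ 0}] = φ(0)² ρ √(1−ρ²)` and
`E[(X₁X₂ − ρ) · 1_{X₁ ≥ 0, X₂ ≥ 0}] = φ(0)² √(1−ρ²)`. -/
theorem stmt11 (ρ : ℝ) (hρ₁ : -1 < ρ) (hρ₂ : ρ < 1) :
    (∫ p in {p : ℝ × ℝ | 0 ≤ p.1 ∧ 0 ≤ ρ * p.1 + Real.sqrt (1 - ρ ^ 2) * p.2},
        (p.1 ^ 2 - 1) ∂((gaussianReal 0 1).prod (gaussianReal 0 1)) =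
      (1 / Real.sqrt (2 * Real.pi)) ^ 2 * ρ * Real.sqrt (1 - ρ ^ 2)) ∧
    (∫ p in {p : ℝ × ℝ | 0 ≤ p.1 ∧ 0 ≤ ρ * p.1 + Real.sqrt (1 - ρ ^ 2) * p.2},
        (p.1 * (ρ * p.1 + Real.sqrt (1 - ρ ^ 2) * p.2) - ρ)
        ∂((gaussianReal 0 1).prod (gaussianReal 0 1)) =
      (1 / Real.sqrt (2 * Real.pi)) ^ 2 * Real.sqrt (1 - ρ ^ 2)) := by
  set t : ℝ := Real.sqrt (1 - ρ ^ 2) with ht_def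
  have h1ρ : 0 < 1 - ρ ^ 2 := by nlinarith
  have ht : 0 < t := Real.sqrt_pos.mpr h1ρ
  have ht2 : t ^ 2 = 1 - ρ ^ 2 := Real.sq_sqrt h1ρ.le
  set s : ℝ := ρ / t with hs_def
  have hst : s * t = ρ := div_mul_cancel₀ ρ ht.ne'
  have hinv : (1 + s ^ 2)⁻¹ = t ^ 2 := by
    have h : 1 + s ^ 2 = (t ^ 2)⁻¹ := by
      rw [hs_def]
      field_simp
      nlinarith [ht2]
    rw [h, inv_inv]
  have h2π : (1 / Real.sqrt (2 * Real.pi)) ^ 2 = (2 * Real.pi)⁻¹ := by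
    rw [div_pow, one_pow, Real.sq_sqrt (by positivity), one_div]
  have hcx : ∀ x : ℝ, -(ρ * x) / t = -(s * x) := by
    intro x; rw [hs_def]; ring
  have h1' : Integrable (fun p : ℝ × ℝ => p.1 ^ 2)
      ((gaussianReal 0 1).prod (gaussianReal 0 1)) := by
    have h1 := integrable_sq_nu.mul_prod
      (integrable_const (1:ℝ) (μ := gaussianReal 0 1))
    exact h1.congr (Filter.Eventually.of_forall fun p => by ring)
  constructor
  · have hf : Integrable (fun p : ℝ × ℝ => p.1 ^ 2 - 1)
        ((gaussianReal 0 1).prod (gaussianReal 0 1)) := h1'.sub (integrable_const 1)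
    rw [reduce ρ t ht _ hf]
    have hpt : ∀ x ∈ Ioi (0:ℝ),
        gpdf x * (∫ y in Ici (-(ρ * x) / t),
          (fun p : ℝ × ℝ => p.1 ^ 2 - 1) (x, y) ∂(gaussianReal 0 1))
        = (x ^ 2 - 1) * gpdf x * gsf (-(s * x)) := by
      intro x _
      dsimp only
      rw [setIntegral_const, measureReal_def, nu_Ici, hcx x, smul_eq_mul]
      ring
    rw [setIntegral_congr_fun measurableSet_Ioi hpt, IBP s, hinv, h2π]
    linear_combination ((2 * Real.pi)⁻¹ * t) * hst
  · have hxy : Integrable (fun p : ℝ × ℝ => p.1 * p.2)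
        ((gaussianReal 0 1).prod (gaussianReal 0 1)) :=
      integrable_id_nu.mul_prod integrable_id_nu
    have hf : Integrable (fun p : ℝ × ℝ => p.1 * (ρ * p.1 + t * p.2) - ρ)
        ((gaussianReal 0 1).prod (gaussianReal 0 1)) := by
      have := ((h1'.const_mul ρ).add (hxy.const_mul t)).sub (integrable_const ρ)
      exact this.congr (Filter.Eventually.of_forall fun p => by
        simp only [Pi.add_apply, Pi.sub_apply]
        ring)
    rw [reduce ρ t ht _ hf]
    have hpt : ∀ x ∈ Ioi (0:ℝ),
        gpdf x * (∫ y in Ici (-(ρ * x) / t),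
          (fun p : ℝ × ℝ => p.1 * (ρ * p.1 + t * p.2) - ρ) (x, y) ∂(gaussianReal 0 1))
        = ρ * ((x ^ 2 - 1) * gpdf x * gsf (-(s * x)))
          + t * (x * gpdf x * gpdf (s * x)) := by
      intro x _
      have hsplit : ∫ y in Ici (-(ρ * x) / t),
            (fun p : ℝ × ℝ => p.1 * (ρ * p.1 + t * p.2) - ρ) (x, y) ∂(gaussianReal 0 1)
          = ∫ y in Ici (-(ρ * x) / t),
            ((ρ * x ^ 2 - ρ) + (t * x) * y) ∂(gaussianReal 0 1) :=
        setIntegral_congr_fun measurableSet_Ici fun y _ => by ring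
      rw [hsplit, MeasureTheory.integral_add ((integrable_const _).integrableOn)
        ((integrable_id_nu.const_mul (t * x)).integrableOn),
        setIntegral_const, measureReal_def, nu_Ici, MeasureTheory.integral_const_mul, nu_inner_id,
        hcx x, gpdf_even (s * x), smul_eq_mul]
      ring
    rw [setIntegral_congr_fun measurableSet_Ioi hpt,
      MeasureTheory.integral_add (((intA s).const_mul ρ).integrableOn)
        (((intB s).const_mul t).integrableOn),
      MeasureTheory.integral_const_mul, MeasureTheory.integral_const_mul, IBP s, K1 s,
      hinv, h2π]
    linear_combination ((2 * Real.pi)⁻¹ * t * ρ) * hst + ((2 * Real.pi)⁻¹ * t) * ht2
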